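/- For every non-negative integer n, F_e(n) ∩ F_τ(n) = {0} and F_e(n) + F_τ(n) = F(n); that is, F(n) = F_e(n) ⊕ F_τ(n). -/

import Mathlib

open Submodule

/-- The increasing sequence of subspaces `F(n)`:
`F(0) = ⊥`, `F(n+1) = Σ_{i,j} (F(n) + Vᵢ) ⊓ (F(n) + Wⱼ)`. -/
noncomputable def Fseq {K E : Type*} [Field K] [AddCommGroup E] [Module K E]
    (V W : Fin 2 → Submodule K E) : ℕ → Submodule K E
  | 0 => ⊥
  | n + 1 => ⨆ i : Fin 2, ⨆ j : Fin 2, (Fseq V W n ⊔ V i) ⊓ (Fseq V W n ⊔ W j)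

/-- For a permutation `σ` of `{1,2}`, the increasing sequence of subspaces `F_σ(n)`:
`F_σ(0) = ⊥`, `F_σ(n+1) = Σ_i (F_σ(n) + Vᵢ) ⊓ (F_σ(n) + W_{σ(i)})`. -/
noncomputable def Fsig {K E : Type*} [Field K] [AddCommGroup E] [Module K E]
    (V W : Fin 2 → Submodule K E) (σ : Equiv.Perm (Fin 2)) : ℕ → Submodule K E
  | 0 => ⊥
  | n + 1 => ⨆ i : Fin 2, (Fsig V W σ n ⊔ V i) ⊓ (Fsig V W σ n ⊔ W (σ i))

section helpers

variable {K E : Type*} [Field K] [AddCommGroup E] [Module K E]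

private lemma iSup_fin2 {α : Type*} [CompleteLattice α] (f : Fin 2 → α) :
    (⨆ i, f i) = f 0 ⊔ f 1 := by
  apply le_antisymm
  · apply iSup_le; intro i; fin_cases i
    · exact le_sup_left
    · exact le_sup_right
  · exact sup_le (le_iSup f 0) (le_iSup f 1)

variable (a b : Module.End K E)

private lemma sign_lemma (hanti : a * b = -(b * a)) (m : ℕ) :
    b ^ m * a = a * b ^ m ∨ b ^ m * a = -(a * b ^ m) := by
  have hba : b * a = -(a * b) := by rw [hanti, neg_neg]
  induction m with
  | zero => left; simp
  | succ m ih =>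
    rcases ih with h | h
    · right
      rw [pow_succ', mul_assoc, h, ← mul_assoc, hba, neg_mul, mul_assoc, ← pow_succ']
    · left
      rw [pow_succ', mul_assoc, h, mul_neg, ← mul_assoc, hba, neg_mul, neg_neg, mul_assoc,
        ← pow_succ']

/-- `a` preserves `ker (b^m)`. -/
private lemma a_ker_b (hanti : a * b = -(b * a)) (m : ℕ) (x : E) (hx : (b ^ m) x = 0) :
    (b ^ m) (a x) = 0 := by
  rcases sign_lemma a b hanti m with h | h
  · have : (b ^ m) (a x) = a ((b ^ m) x) := by
      rw [← Module.End.mul_apply, h, Module.End.mul_apply]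
    rw [this, hx, map_zero]
  · have : (b ^ m) (a x) = -(a ((b ^ m) x)) := by
      rw [← Module.End.mul_apply, h, LinearMap.neg_apply, Module.End.mul_apply]
    rw [this, hx, map_zero, neg_zero]

private lemma b_ker_b (m : ℕ) (x : E) (hx : (b ^ m) x = 0) : (b ^ m) (b x) = 0 := by
  have : (b ^ m) (b x) = b ((b ^ m) x) := by
    rw [← Module.End.mul_apply, ← pow_succ, pow_succ', Module.End.mul_apply]
  rw [this, hx, map_zero]

private lemma keyAux (hanti : a * b = -(b * a)) (hsq : a * a + b * b = 1) :
    ∀ N n m (x : E), n + m ≤ N → (a ^ n) x = 0 → (b ^ m) x = 0 → x = 0 := by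
  have hba : b * a = -(a * b) := by rw [hanti, neg_neg]
  intro N
  induction N with
  | zero =>
    intro n m x hle ha _
    have hn : n = 0 := by omega
    subst hn; simpa using ha
  | succ N ih =>
    intro n m x hle ha hb
    cases n with
    | zero => simpa using ha
    | succ n' =>
      cases m with
      | zero => simpa using hb
      | succ m' =>
        have hx : (a * a) x + (b * b) x = x := by
          have := DFunLike.congr_fun hsq x
          simpa [Module.End.mul_apply] using this
        have haa : (a * a) x = 0 := by
          apply ih n' (m' + 1) _ (by omega)
          · have h1 : (a ^ n') ((a * a) x) = a ((a ^ (n' + 1)) x) := by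
              rw [← Module.End.mul_apply, ← Module.End.mul_apply, ← pow_two, ← pow_add, ← pow_succ']
            rw [h1, ha, map_zero]
          · exact a_ker_b a b hanti _ _ (a_ker_b a b hanti _ _ hb)
        have hbb : (b * b) x = 0 := by
          apply ih (n' + 1) m' _ (by omega)
          · exact a_ker_b b a hba _ _ (a_ker_b b a hba _ _ ha)
          · have h1 : (b ^ m') ((b * b) x) = b ((b ^ (m' + 1)) x) := by
              rw [← Module.End.mul_apply, ← Module.End.mul_apply, ← pow_two, ← pow_add, ← pow_succ']
            rw [h1, hb, map_zero]
        rw [← hx, haa, hbb, add_zero]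

private lemma keySplit [FiniteDimensional K E] (hanti : a * b = -(b * a))
    (hsq : a * a + b * b = 1) (n : ℕ) (x : E)
    (hx : b x ∈ LinearMap.ker (a ^ n) ⊔ LinearMap.ker (b ^ n)) :
    x ∈ LinearMap.ker (a ^ (n + 1)) ⊔ LinearMap.ker (b ^ (n + 1)) := by
  have hba : b * a = -(a * b) := by rw [hanti, neg_neg]
  obtain ⟨k, hk⟩ := Filter.eventually_atTop.mp (LinearMap.eventually_isCompl_ker_pow_range_pow a)
  set d : ℕ := 2 * (k + n + 1) with hd
  have hcompl : IsCompl (LinearMap.ker (a ^ d)) (LinearMap.range (a ^ d)) := hk d (by omega)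
  have hnd : n ≤ d := by omega
  have hc2 : b * (a * a) = (a * a) * b := by
    rw [← mul_assoc, hba, neg_mul, mul_assoc, hba, mul_neg, neg_neg, ← mul_assoc]
  have hcd : b * a ^ d = a ^ d * b := by
    have h1 : a ^ d = (a * a) ^ (k + n + 1) := by rw [← pow_two, ← pow_mul]
    rw [h1]
    exact ((show Commute b (a * a) from hc2).pow_right (k + n + 1)).eq
  have hker_b : ∀ z : E, (a ^ d) z = 0 → (a ^ d) (b z) = 0 := by
    intro z hz
    rw [← Module.End.mul_apply, ← hcd, Module.End.mul_apply, hz, map_zero]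
  have hker_bn : ∀ (j : ℕ) (z : E), (a ^ d) z = 0 → (a ^ d) ((b ^ j) z) = 0 := by
    intro j
    induction j with
    | zero => intro z hz; simpa using hz
    | succ j ih =>
      intro z hz
      have h : (b ^ (j + 1)) z = (b ^ j) (b z) := by
        rw [← Module.End.mul_apply, ← pow_succ]
      rw [h]
      exact ih _ (hker_b z hz)
  have hrange_b : ∀ z : E, z ∈ LinearMap.range (a ^ d) → b z ∈ LinearMap.range (a ^ d) := by
    rintro z ⟨y, rfl⟩
    exact ⟨b y, by rw [← Module.End.mul_apply, ← hcd, Module.End.mul_apply]⟩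
  have hrange_bn : ∀ (j : ℕ) (z : E), z ∈ LinearMap.range (a ^ d) →
      (b ^ j) z ∈ LinearMap.range (a ^ d) := by
    intro j
    induction j with
    | zero => intro z hz; simpa using hz
    | succ j ih =>
      intro z hz
      have h : (b ^ (j + 1)) z = (b ^ j) (b z) := by
        rw [← Module.End.mul_apply, ← pow_succ]
      rw [h]
      exact ih _ (hrange_b z hz)
  have hker_an : ∀ z : E, (a ^ d) z = 0 → (a ^ d) ((a ^ n) z) = 0 := by
    intro z hz
    rw [← Module.End.mul_apply, pow_mul_comm, Module.End.mul_apply, hz, map_zero]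
  have hrange_an : ∀ z : E, z ∈ LinearMap.range (a ^ d) →
      (a ^ n) z ∈ LinearMap.range (a ^ d) := by
    rintro z ⟨y, rfl⟩
    exact ⟨(a ^ n) y, by rw [← Module.End.mul_apply, pow_mul_comm, Module.End.mul_apply]⟩
  have hzero : ∀ z : E, (a ^ d) z = 0 → z ∈ LinearMap.range (a ^ d) → z = 0 := by
    intro z h1 h2
    exact (Submodule.disjoint_def.mp hcompl.disjoint) z (LinearMap.mem_ker.mpr h1) h2
  have hx_top : x ∈ LinearMap.ker (a ^ d) ⊔ LinearMap.range (a ^ d) := by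
    rw [codisjoint_iff.mp hcompl.codisjoint]; trivial
  obtain ⟨u, hu, w, hw, huw⟩ := mem_sup.mp hx_top
  rw [LinearMap.mem_ker] at hu
  obtain ⟨α, hα, β, hβ, hαβ⟩ := mem_sup.mp hx
  rw [LinearMap.mem_ker] at hα hβ
  have hα_top : α ∈ LinearMap.ker (a ^ d) ⊔ LinearMap.range (a ^ d) := by
    rw [codisjoint_iff.mp hcompl.codisjoint]; trivial
  obtain ⟨α₁, hα₁, α₂, hα₂, hαs⟩ := mem_sup.mp hα_top
  rw [LinearMap.mem_ker] at hα₁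
  have hβ_top : β ∈ LinearMap.ker (a ^ d) ⊔ LinearMap.range (a ^ d) := by
    rw [codisjoint_iff.mp hcompl.codisjoint]; trivial
  obtain ⟨β₁, hβ₁, β₂, hβ₂, hβs⟩ := mem_sup.mp hβ_top
  rw [LinearMap.mem_ker] at hβ₁
  have hαsplit : (a ^ n) α₁ + (a ^ n) α₂ = 0 := by rw [← map_add, hαs]; exact hα
  have hα₂0 : α₂ = 0 := by
    have h1 : (a ^ n) α₂ = -((a ^ n) α₁) := eq_neg_of_add_eq_zero_right hαsplit
    have h1' : (a ^ d) ((a ^ n) α₂) = 0 := by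
      rw [h1, map_neg, hker_an α₁ hα₁, neg_zero]
    have h3 : (a ^ n) α₂ = 0 := hzero _ h1' (hrange_an α₂ hα₂)
    exact hzero _ (Module.End.pow_map_zero_of_le hnd h3) hα₂
  have hβsplit : (b ^ n) β₁ + (b ^ n) β₂ = 0 := by rw [← map_add, hβs]; exact hβ
  have hβ₂ker : (b ^ n) β₂ = 0 := by
    apply hzero _ _ (hrange_bn n β₂ hβ₂)
    have h1 : (b ^ n) β₂ = -((b ^ n) β₁) := eq_neg_of_add_eq_zero_right hβsplit
    rw [h1, map_neg, hker_bn n β₁ hβ₁, neg_zero]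
  have hβ₁0 : β₁ = 0 := by
    have h3 : (b ^ n) β₁ = 0 := by
      have h := hβsplit; rw [hβ₂ker, add_zero] at h; exact h
    exact keyAux a b hanti hsq (d + n) d n β₁ le_rfl hβ₁ h3
  have hbx : b u + b w = α₁ + β₂ := by
    calc b u + b w = b x := by rw [← map_add, huw]
      _ = α + β := hαβ.symm
      _ = α₁ + β₂ := by rw [← hαs, ← hβs, hα₂0, hβ₁0, add_zero, zero_add]
  have hbu_ker : (a ^ d) (b u) = 0 := hker_b u hu
  have hbw_range : b w ∈ LinearMap.range (a ^ d) := hrange_b w hw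
  have hdiff : b u - α₁ = 0 := by
    apply hzero
    · rw [map_sub, hbu_ker, hα₁, sub_zero]
    · have h : b u - α₁ = β₂ - b w := sub_eq_sub_iff_add_eq_add.mpr (hbx.trans (add_comm α₁ β₂))
      rw [h]
      exact Submodule.sub_mem _ hβ₂ hbw_range
  have hbu : b u = α₁ := by rwa [sub_eq_zero] at hdiff
  have hbw : b w = β₂ := by
    have h : b u + b w = α₁ + β₂ := hbx
    rw [hbu] at h
    exact add_left_cancel h
  have hwker : (b ^ (n + 1)) w = 0 := by
    have h : (b ^ (n + 1)) w = (b ^ n) (b w) := by rw [← Module.End.mul_apply, ← pow_succ]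
    rw [h, hbw, hβ₂ker]
  have hαn : (a ^ n) α₁ = 0 := by
    have h := hαsplit; rw [hα₂0, map_zero, add_zero] at h; exact h
  have h5 : (a ^ n) (b u) = 0 := by rw [hbu]; exact hαn
  have h6 : b ((a ^ n) u) = 0 := by
    rcases sign_lemma b a hba n with h | h
    · rw [← Module.End.mul_apply, ← h, Module.End.mul_apply, h5]
    · have h' : b * a ^ n = -(a ^ n * b) := by rw [h, neg_neg]
      rw [← Module.End.mul_apply, h', LinearMap.neg_apply, Module.End.mul_apply, h5, neg_zero]
  have h8 : (a ^ n) u = 0 := by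
    apply keyAux a b hanti hsq (d + 1) d 1 _ le_rfl (hker_an u hu)
    rw [pow_one]; exact h6
  have huker : (a ^ (n + 1)) u = 0 := by
    have h : (a ^ (n + 1)) u = a ((a ^ n) u) := by rw [← Module.End.mul_apply, ← pow_succ']
    rw [h, h8, map_zero]
  exact mem_sup.mpr ⟨u, LinearMap.mem_ker.mpr huker, w, LinearMap.mem_ker.mpr hwker, huw⟩

private lemma exists_proj (U U' : Submodule K E) (h : IsCompl U U') :
    ∃ f : Module.End K E, (∀ x, f x ∈ U) ∧ (∀ x ∈ U, f x = x) ∧ (∀ x ∈ U', f x = 0) := by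
  refine ⟨U.subtype ∘ₗ U.projectionOnto U' h, ?_, ?_, ?_⟩
  · intro x
    exact (U.projectionOnto U' h x).2
  · intro x hx
    have h1 := Submodule.projectionOnto_apply_of_mem_left h hx
    rw [LinearMap.comp_apply, h1]; rfl
  · intro x hx
    have h1 := Submodule.projectionOnto_apply_of_mem_right h hx
    simp [LinearMap.comp_apply, h1]

private lemma proj_sub (U U' : Submodule K E) (h : IsCompl U U') (f : Module.End K E)
    (hl : ∀ x ∈ U, f x = x) (hr : ∀ x ∈ U', f x = 0) : ∀ x, x - f x ∈ U' := by
  intro x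
  have hx : x ∈ U ⊔ U' := by rw [codisjoint_iff.mp h.codisjoint]; trivial
  obtain ⟨u, hu, u', hu', huu⟩ := mem_sup.mp hx
  have hfx : f x = u := by
    rw [← huu, map_add, hl u hu, hr u' hu', add_zero]
  rw [hfx, ← huu]
  simpa using hu'

end helpers

/-- For every `n`, `F(n) = F_e(n) ⊕ F_τ(n)`, where `e` is the identity permutation
and `τ` the transposition. -/
theorem stmt9 {K E : Type*} [Field K] [AddCommGroup E] [Module K E]
    [FiniteDimensional K E] (hchar : (2 : K) ≠ 0)
    (V W : Fin 2 → Submodule K E)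
    (hV : IsCompl (V 0) (V 1)) (hW : IsCompl (W 0) (W 1)) :
    ∀ n : ℕ,
      Fsig V W 1 n ⊓ Fsig V W (Equiv.swap 0 1) n = ⊥ ∧
      Fsig V W 1 n ⊔ Fsig V W (Equiv.swap 0 1) n = Fseq V W n := by
  classical
  obtain ⟨π, hπ0, hπl, hπr⟩ := exists_proj (V 0) (V 1) hV
  obtain ⟨ρ, hρ0, hρl, hρr⟩ := exists_proj (W 0) (W 1) hW
  have hπsub : ∀ x, x - π x ∈ V 1 := proj_sub (V 0) (V 1) hV π hπl hπr
  have hρsub : ∀ x, x - ρ x ∈ W 1 := proj_sub (W 0) (W 1) hW ρ hρl hρr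
  set a : Module.End K E := π + ρ - 1 with ha
  set b : Module.End K E := π - ρ with hb
  have hax : ∀ x, a x = π x + ρ x - x := by
    intro x; simp [ha, LinearMap.sub_apply, LinearMap.add_apply, Module.End.one_apply]
  have hbval : ∀ x, b x = π x - ρ x := by
    intro x; simp [hb, LinearMap.sub_apply]
  have hππ : π * π = π := by
    ext x; simp [Module.End.mul_apply, hπl _ (hπ0 x)]
  have hρρ : ρ * ρ = ρ := by
    ext x; simp [Module.End.mul_apply, hρl _ (hρ0 x)]
  have hanti : a * b = -(b * a) := by
    rw [ha, hb]; noncomm_ring [hππ, hρρ]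
  have hsq : a * a + b * b = 1 := by
    rw [ha, hb]; noncomm_ring [hππ, hρρ]
  have hba : b * a = -(a * b) := by rw [hanti, neg_neg]
  have hsq' : b * b + a * a = 1 := by rw [add_comm]; exact hsq
  -- half formulas
  have hπhalf : ∀ x, π x = (2 : K)⁻¹ • (x + a x + b x) := by
    intro x
    have h1 : x + a x + b x = (2 : K) • π x := by
      rw [hax, hbval, two_smul]; abel
    rw [h1, smul_smul, inv_mul_cancel₀ hchar, one_smul]
  have hρhalf : ∀ x, ρ x = (2 : K)⁻¹ • (x + a x - b x) := by
    intro x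
    have h1 : x + a x - b x = (2 : K) • ρ x := by
      rw [hax, hbval, two_smul]; abel
    rw [h1, smul_smul, inv_mul_cancel₀ hchar, one_smul]
  -- stability of kernels of powers under π and ρ
  have hstab : ∀ (c : Module.End K E) (m : ℕ),
      (∀ z, (c ^ m) z = 0 → (c ^ m) (a z) = 0) →
      (∀ z, (c ^ m) z = 0 → (c ^ m) (b z) = 0) →
      ∀ z, (c ^ m) z = 0 → (c ^ m) (π z) = 0 ∧ (c ^ m) (ρ z) = 0 := by
    intro c m hA hB z hz
    constructor
    · rw [hπhalf z, map_smul, map_add, map_add, hz, hA z hz, hB z hz]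
      simp
    · rw [hρhalf z, map_smul, map_sub, map_add, hz, hA z hz, hB z hz]
      simp
  have hSb : ∀ m z, (b ^ m) z = 0 → (b ^ m) (π z) = 0 ∧ (b ^ m) (ρ z) = 0 :=
    fun m => hstab b m (fun z hz => a_ker_b a b hanti m z hz) (fun z hz => b_ker_b b m z hz)
  have hSa : ∀ m z, (a ^ m) z = 0 → (a ^ m) (π z) = 0 ∧ (a ^ m) (ρ z) = 0 :=
    fun m => hstab a m (fun z hz => b_ker_b a m z hz) (fun z hz => a_ker_b b a hba m z hz)
  -- the main induction
  have main : ∀ n : ℕ, Fsig V W 1 n = LinearMap.ker (b ^ n) ∧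
      Fsig V W (Equiv.swap 0 1) n = LinearMap.ker (a ^ n) ∧
      Fseq V W n = LinearMap.ker (a ^ n) ⊔ LinearMap.ker (b ^ n) := by
    intro n
    induction n with
    | zero =>
      refine ⟨?_, ?_, ?_⟩ <;> simp [Fsig, Fseq, Module.End.one_eq_id]
    | succ n ih =>
      obtain ⟨ihe, iht, ihF⟩ := ih
      -- identity permutation case
      have he : Fsig V W 1 (n + 1) = LinearMap.ker (b ^ (n + 1)) := by
        have hunf : Fsig V W 1 (n + 1) =
            ((LinearMap.ker (b ^ n) ⊔ V 0) ⊓ (LinearMap.ker (b ^ n) ⊔ W 0)) ⊔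
            ((LinearMap.ker (b ^ n) ⊔ V 1) ⊓ (LinearMap.ker (b ^ n) ⊔ W 1)) := by
          simp only [Fsig]
          rw [ihe, iSup_fin2]
          simp only [Equiv.Perm.coe_one, id_eq]
        rw [hunf]
        apply le_antisymm
        · apply sup_le
          · intro x hx
            obtain ⟨h1, h2⟩ := Submodule.mem_inf.mp hx
            obtain ⟨f, hf, v, hv, hfv⟩ := mem_sup.mp h1
            obtain ⟨g, hg, w, hw, hgw⟩ := mem_sup.mp h2
            rw [LinearMap.mem_ker] at hf hg ⊢
            have hbv : b x = (π f - ρ g) + (g - f) := by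
              have hπx : π x = π f + v := by rw [← hfv, map_add, hπl v hv]
              have hρx : ρ x = ρ g + w := by rw [← hgw, map_add, hρl w hw]
              have hvw : v - w = g - f := by
                have e1 : v = x - f := by rw [← hfv]; abel
                have e2 : w = x - g := by rw [← hgw]; abel
                rw [e1, e2]; abel
              calc b x = π x - ρ x := hbval x
                _ = (π f - ρ g) + (v - w) := by rw [hπx, hρx]; abel
                _ = (π f - ρ g) + (g - f) := by rw [hvw]
            have hstep : (b ^ (n + 1)) x = (b ^ n) (b x) := by
              rw [← Module.End.mul_apply, ← pow_succ]
            rw [hstep, hbv, map_add, map_sub, map_sub, (hSb n f hf).1, (hSb n g hg).2, hf, hg]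
            simp
          · intro x hx
            obtain ⟨h1, h2⟩ := Submodule.mem_inf.mp hx
            obtain ⟨f, hf, v, hv, hfv⟩ := mem_sup.mp h1
            obtain ⟨g, hg, w, hw, hgw⟩ := mem_sup.mp h2
            rw [LinearMap.mem_ker] at hf hg ⊢
            have hbv : b x = π f - ρ g := by
              have hπx : π x = π f := by rw [← hfv, map_add, hπr v hv, add_zero]
              have hρx : ρ x = ρ g := by rw [← hgw, map_add, hρr w hw, add_zero]
              rw [hbval x, hπx, hρx]
            have hstep : (b ^ (n + 1)) x = (b ^ n) (b x) := by
              rw [← Module.End.mul_apply, ← pow_succ]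
            rw [hstep, hbv, map_sub, (hSb n f hf).1, (hSb n g hg).2]
            simp
        · intro x hx
          rw [LinearMap.mem_ker] at hx
          have hπmem : π x ∈ (LinearMap.ker (b ^ n) ⊔ V 0) ⊓ (LinearMap.ker (b ^ n) ⊔ W 0) := by
            refine Submodule.mem_inf.mpr ⟨mem_sup_right (hπ0 x), ?_⟩
            refine mem_sup.mpr ⟨b (π x), ?_, ρ (π x), hρ0 (π x), ?_⟩
            · rw [LinearMap.mem_ker]
              have h1 : (b ^ n) (b (π x)) = (b ^ (n + 1)) (π x) := by
                rw [← Module.End.mul_apply, ← pow_succ]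
              rw [h1, (hSb (n + 1) x hx).1]
            · rw [hbval, hπl _ (hπ0 x)]; abel
          have hzmem : x - π x ∈ (LinearMap.ker (b ^ n) ⊔ V 1) ⊓ (LinearMap.ker (b ^ n) ⊔ W 1) := by
            refine Submodule.mem_inf.mpr ⟨mem_sup_right (hπsub x), ?_⟩
            refine mem_sup.mpr ⟨-(b (x - π x)), ?_, (x - π x) - ρ (x - π x), hρsub _, ?_⟩
            · rw [LinearMap.mem_ker, map_neg]
              have h1 : (b ^ n) (b (x - π x)) = (b ^ (n + 1)) (x - π x) := by
                rw [← Module.End.mul_apply, ← pow_succ]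
              rw [h1, map_sub, hx, (hSb (n + 1) x hx).1]
              simp
            · have h1 : π (x - π x) = 0 := by
                rw [map_sub, hπl _ (hπ0 x), sub_self]
              rw [hbval, h1]; abel
          exact mem_sup.mpr ⟨π x, hπmem, x - π x, hzmem, by abel⟩
      -- transposition case
      have ht : Fsig V W (Equiv.swap 0 1) (n + 1) = LinearMap.ker (a ^ (n + 1)) := by
        have hunf : Fsig V W (Equiv.swap 0 1) (n + 1) =
            ((LinearMap.ker (a ^ n) ⊔ V 0) ⊓ (LinearMap.ker (a ^ n) ⊔ W 1)) ⊔
            ((LinearMap.ker (a ^ n) ⊔ V 1) ⊓ (LinearMap.ker (a ^ n) ⊔ W 0)) := by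
          simp only [Fsig]
          rw [iht, iSup_fin2]
          rw [Equiv.swap_apply_left, Equiv.swap_apply_right]
        rw [hunf]
        apply le_antisymm
        · apply sup_le
          · intro x hx
            obtain ⟨h1, h2⟩ := Submodule.mem_inf.mp hx
            obtain ⟨f, hf, v, hv, hfv⟩ := mem_sup.mp h1
            obtain ⟨g, hg, w, hw, hgw⟩ := mem_sup.mp h2
            rw [LinearMap.mem_ker] at hf hg ⊢
            have hav : a x = (π f + ρ g) - f := by
              have hπx : π x = π f + v := by rw [← hfv, map_add, hπl v hv]
              have hρx : ρ x = ρ g := by rw [← hgw, map_add, hρr w hw, add_zero]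
              calc a x = π x + ρ x - x := hax x
                _ = (π f + v) + ρ g - (f + v) := by rw [hπx, hρx, hfv]
                _ = (π f + ρ g) - f := by abel
            have hstep : (a ^ (n + 1)) x = (a ^ n) (a x) := by
              rw [← Module.End.mul_apply, ← pow_succ]
            rw [hstep, hav, map_sub, map_add, (hSa n f hf).1, (hSa n g hg).2, hf]
            simp
          · intro x hx
            obtain ⟨h1, h2⟩ := Submodule.mem_inf.mp hx
            obtain ⟨f, hf, v, hv, hfv⟩ := mem_sup.mp h1
            obtain ⟨g, hg, w, hw, hgw⟩ := mem_sup.mp h2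
            rw [LinearMap.mem_ker] at hf hg ⊢
            have hav : a x = (π f + ρ g) - g := by
              have hπx : π x = π f := by rw [← hfv, map_add, hπr v hv, add_zero]
              have hρx : ρ x = ρ g + w := by rw [← hgw, map_add, hρl w hw]
              calc a x = π x + ρ x - x := hax x
                _ = π f + (ρ g + w) - (g + w) := by rw [hπx, hρx, hgw]
                _ = (π f + ρ g) - g := by abel
            have hstep : (a ^ (n + 1)) x = (a ^ n) (a x) := by
              rw [← Module.End.mul_apply, ← pow_succ]
            rw [hstep, hav, map_sub, map_add, (hSa n f hf).1, (hSa n g hg).2, hg]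
            simp
        · intro x hx
          rw [LinearMap.mem_ker] at hx
          have hπmem : π x ∈ (LinearMap.ker (a ^ n) ⊔ V 0) ⊓ (LinearMap.ker (a ^ n) ⊔ W 1) := by
            refine Submodule.mem_inf.mpr ⟨mem_sup_right (hπ0 x), ?_⟩
            refine mem_sup.mpr ⟨a (π x), ?_, π x - ρ (π x), hρsub _, ?_⟩
            · rw [LinearMap.mem_ker]
              have h1 : (a ^ n) (a (π x)) = (a ^ (n + 1)) (π x) := by
                rw [← Module.End.mul_apply, ← pow_succ]
              rw [h1, (hSa (n + 1) x hx).1]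
            · rw [hax, hπl _ (hπ0 x)]; abel
          have hzmem : x - π x ∈ (LinearMap.ker (a ^ n) ⊔ V 1) ⊓ (LinearMap.ker (a ^ n) ⊔ W 0) := by
            refine Submodule.mem_inf.mpr ⟨mem_sup_right (hπsub x), ?_⟩
            refine mem_sup.mpr ⟨-(a (x - π x)), ?_, ρ (x - π x), hρ0 _, ?_⟩
            · rw [LinearMap.mem_ker, map_neg]
              have h1 : (a ^ n) (a (x - π x)) = (a ^ (n + 1)) (x - π x) := by
                rw [← Module.End.mul_apply, ← pow_succ]
              rw [h1, map_sub, hx, (hSa (n + 1) x hx).1]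
              simp
            · have h1 : π (x - π x) = 0 := by
                rw [map_sub, hπl _ (hπ0 x), sub_self]
              rw [hax, h1]; abel
          exact mem_sup.mpr ⟨π x, hπmem, x - π x, hzmem, by abel⟩
      -- the full sequence
      have hFs : Fseq V W (n + 1) = LinearMap.ker (a ^ (n + 1)) ⊔ LinearMap.ker (b ^ (n + 1)) := by
        have hunfold : Fseq V W (n + 1) =
            ⨆ i : Fin 2, ⨆ j : Fin 2, (Fseq V W n ⊔ V i) ⊓ (Fseq V W n ⊔ W j) := by
          simp only [Fseq]
        -- K stability
        have hπK : ∀ z ∈ Fseq V W n, π z ∈ Fseq V W n ∧ ρ z ∈ Fseq V W n := by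
          intro z hz
          rw [ihF] at hz ⊢
          obtain ⟨z₁, hz₁, z₂, hz₂, hzz⟩ := mem_sup.mp hz
          rw [LinearMap.mem_ker] at hz₁ hz₂
          constructor
          · rw [← hzz, map_add]
            exact Submodule.add_mem _ (mem_sup_left (LinearMap.mem_ker.mpr (hSa n z₁ hz₁).1))
              (mem_sup_right (LinearMap.mem_ker.mpr (hSb n z₂ hz₂).1))
          · rw [← hzz, map_add]
            exact Submodule.add_mem _ (mem_sup_left (LinearMap.mem_ker.mpr (hSa n z₁ hz₁).2))
              (mem_sup_right (LinearMap.mem_ker.mpr (hSb n z₂ hz₂).2))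
        rw [hunfold]
        apply le_antisymm
        · apply iSup₂_le
          intro i j
          intro x hx
          obtain ⟨h1, h2⟩ := Submodule.mem_inf.mp hx
          obtain ⟨f, hf, v, hv, hfv⟩ := mem_sup.mp h1
          obtain ⟨g, hg, w, hw, hgw⟩ := mem_sup.mp h2
          have hfK := hπK f hf
          have hgK := hπK g hg
          have hfK' := hf
          have hgK' := hg
          rw [ihF] at hfK' hgK'
          have hπfK : π f ∈ LinearMap.ker (a ^ n) ⊔ LinearMap.ker (b ^ n) := by
            rw [← ihF]; exact hfK.1
          have hρgK : ρ g ∈ LinearMap.ker (a ^ n) ⊔ LinearMap.ker (b ^ n) := by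
            rw [← ihF]; exact hgK.2
          fin_cases i <;> fin_cases j
          · -- i = 0, j = 0 : use b
            have hbv : b x = (π f - ρ g) + (g - f) := by
              have hπx : π x = π f + v := by rw [← hfv, map_add, hπl v hv]
              have hρx : ρ x = ρ g + w := by rw [← hgw, map_add, hρl w hw]
              have hvw : v - w = g - f := by
                have e1 : v = x - f := by rw [← hfv]; abel
                have e2 : w = x - g := by rw [← hgw]; abel
                rw [e1, e2]; abel
              calc b x = π x - ρ x := hbval x
                _ = (π f - ρ g) + (v - w) := by rw [hπx, hρx]; abel
                _ = (π f - ρ g) + (g - f) := by rw [hvw]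
            have hbmem : b x ∈ LinearMap.ker (a ^ n) ⊔ LinearMap.ker (b ^ n) := by
              rw [hbv]
              exact Submodule.add_mem _ (Submodule.sub_mem _ hπfK hρgK)
                (Submodule.sub_mem _ hgK' hfK')
            exact keySplit a b hanti hsq n x hbmem
          · -- i = 0, j = 1 : use a
            have hav : a x = (π f + ρ g) - f := by
              have hπx : π x = π f + v := by rw [← hfv, map_add, hπl v hv]
              have hρx : ρ x = ρ g := by rw [← hgw, map_add, hρr w hw, add_zero]
              calc a x = π x + ρ x - x := hax x
                _ = (π f + v) + ρ g - (f + v) := by rw [hπx, hρx, hfv]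
                _ = (π f + ρ g) - f := by abel
            have hamem : a x ∈ LinearMap.ker (b ^ n) ⊔ LinearMap.ker (a ^ n) := by
              rw [hav, sup_comm]
              exact Submodule.sub_mem _ (Submodule.add_mem _ hπfK hρgK) hfK'
            have := keySplit b a hba hsq' n x hamem
            rwa [sup_comm] at this
          · -- i = 1, j = 0 : use a
            have hav : a x = (π f + ρ g) - g := by
              have hπx : π x = π f := by rw [← hfv, map_add, hπr v hv, add_zero]
              have hρx : ρ x = ρ g + w := by rw [← hgw, map_add, hρl w hw]
              calc a x = π x + ρ x - x := hax x
                _ = π f + (ρ g + w) - (g + w) := by rw [hπx, hρx, hgw]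
                _ = (π f + ρ g) - g := by abel
            have hamem : a x ∈ LinearMap.ker (b ^ n) ⊔ LinearMap.ker (a ^ n) := by
              rw [hav, sup_comm]
              exact Submodule.sub_mem _ (Submodule.add_mem _ hπfK hρgK) hgK'
            have := keySplit b a hba hsq' n x hamem
            rwa [sup_comm] at this
          · -- i = 1, j = 1 : use b
            have hbv : b x = π f - ρ g := by
              have hπx : π x = π f := by rw [← hfv, map_add, hπr v hv, add_zero]
              have hρx : ρ x = ρ g := by rw [← hgw, map_add, hρr w hw, add_zero]
              rw [hbval x, hπx, hρx]
            have hbmem : b x ∈ LinearMap.ker (a ^ n) ⊔ LinearMap.ker (b ^ n) := by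
              rw [hbv]
              exact Submodule.sub_mem _ hπfK hρgK
            exact keySplit a b hanti hsq n x hbmem
        · apply sup_le
          · -- ker (a ^ (n+1)) ≤ Fseq (n+1) via the transposition
            rw [← ht]
            have hle : Fsig V W (Equiv.swap 0 1) n ≤ Fseq V W n := by
              rw [iht, ihF]; exact le_sup_left
            have hunf2 : Fsig V W (Equiv.swap 0 1) (n + 1) =
                ⨆ i : Fin 2, (Fsig V W (Equiv.swap 0 1) n ⊔ V i) ⊓
                  (Fsig V W (Equiv.swap 0 1) n ⊔ W ((Equiv.swap 0 1 : Equiv.Perm (Fin 2)) i)) := by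
              simp only [Fsig]
            rw [hunf2]
            apply iSup_le
            intro i
            refine le_trans (inf_le_inf (sup_le_sup_right hle _) (sup_le_sup_right hle _)) ?_
            exact le_iSup₂ (f := fun i j => (Fseq V W n ⊔ V i) ⊓ (Fseq V W n ⊔ W j)) i
              ((Equiv.swap 0 1 : Equiv.Perm (Fin 2)) i)
          · rw [← he]
            have hle : Fsig V W 1 n ≤ Fseq V W n := by
              rw [ihe, ihF]; exact le_sup_right
            have hunf2 : Fsig V W 1 (n + 1) =
                ⨆ i : Fin 2, (Fsig V W 1 n ⊔ V i) ⊓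
                  (Fsig V W 1 n ⊔ W ((1 : Equiv.Perm (Fin 2)) i)) := by
              simp only [Fsig]
            rw [hunf2]
            apply iSup_le
            intro i
            refine le_trans (inf_le_inf (sup_le_sup_right hle _) (sup_le_sup_right hle _)) ?_
            exact le_iSup₂ (f := fun i j => (Fseq V W n ⊔ V i) ⊓ (Fseq V W n ⊔ W j)) i
              ((1 : Equiv.Perm (Fin 2)) i)
      exact ⟨he, ht, hFs⟩
  intro n
  obtain ⟨he, ht, hF⟩ := main n
  constructor
  · rw [he, ht]
    rw [Submodule.eq_bot_iff]
    intro x hx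
    obtain ⟨hxb, hxa⟩ := Submodule.mem_inf.mp hx
    rw [LinearMap.mem_ker] at hxb hxa
    exact keyAux a b hanti hsq (n + n) n n x le_rfl hxa hxb
  · rw [he, ht, hF, sup_comm]
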